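/- Let m ≥ 0 be an integer and let a_0, …, a_m be positive real numbers satisfying a Diophantine bound with constants C > 0 and ν ≥ 1. Then there exists c > 0 such that for every z ∈ ℂ^{m+1} and every real t ≥ 1, Σ_{j=0}^{m} |e^{i a_j t} − 1|·|z_j| ≥ c · t^{1−ν} · min_{0≤j≤m} |z_j|. -/

import Mathlib

open scoped Real

/-- The set of integer lattice points in Euclidean space `ℝ^{m+1}`. -/
def intLattice (m : ℕ) : Set (EuclideanSpace ℝ (Fin (m + 1))) :=
  {w | ∀ j, ∃ n : ℤ, w j = (n : ℝ)}

lemma abs_exp_I_mul_sub_one (y : ℝ) :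
    ‖Complex.exp (Complex.I * y) - 1‖ = 2 * |Real.sin (y / 2)| := by
  have h : Complex.exp (Complex.I * y) - 1
      = Complex.exp ((y / 2 : ℝ) * Complex.I) * (2 * Complex.I * Complex.sin ((y / 2 : ℝ))) := by
    rw [Complex.sin]
    push_cast
    rw [neg_mul, Complex.exp_neg]
    set e := Complex.exp ((y : ℂ) / 2 * Complex.I) with he
    have hne : e ≠ 0 := Complex.exp_ne_zero _
    have h2 : Complex.exp (Complex.I * y) = e * e := by
      rw [he, ← Complex.exp_add]; congr 1; ring
    rw [h2]
    field_simp
    ring_nf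
    rw [Complex.I_sq]
    ring
  rw [h, norm_mul, norm_mul, norm_mul, Complex.norm_exp_ofReal_mul_I, Complex.norm_two,
    Complex.norm_I, ← Complex.ofReal_sin, Complex.norm_real, Real.norm_eq_abs]
  ring

lemma four_mul_dist_le (x : ℝ) :
    4 * |x - round x| ≤ ‖Complex.exp (Complex.I * (2 * π * x)) - 1‖ := by
  set f : ℝ := x - round x with hf
  have hexp : Complex.exp (Complex.I * (2 * π * x)) = Complex.exp (Complex.I * (2 * π * f)) := by
    have hx : (x : ℝ) = f + round x := by ring
    rw [hx]
    push_cast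
    rw [show Complex.I * (2 * ↑π * (↑f + ↑(round x)))
        = Complex.I * (2 * ↑π * ↑f) + (round x : ℤ) * (2 * ↑π * Complex.I) by push_cast; ring,
      Complex.exp_add, Complex.exp_int_mul_two_pi_mul_I, mul_one]
  rw [hexp, show (2 * (π:ℂ) * (f:ℂ)) = ((2 * π * f : ℝ) : ℂ) by push_cast; ring,
    abs_exp_I_mul_sub_one, show 2 * π * f / 2 = π * f by ring]
  have hfle : |f| ≤ 1 / 2 := abs_sub_round x
  have hπ : (0:ℝ) < π := Real.pi_pos
  have h2 : |Real.sin (π * f)| = Real.sin (π * |f|) := by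
    rcases abs_cases f with ⟨h, _⟩ | ⟨h, _⟩
    · rw [h, abs_of_nonneg]
      exact Real.sin_nonneg_of_nonneg_of_le_pi (by nlinarith [abs_nonneg f, h ▸ abs_nonneg f])
        (by nlinarith [h ▸ hfle])
    · have hs : Real.sin (π * f) ≤ 0 := by
        have hb := Real.sin_nonneg_of_nonneg_of_le_pi (x := π * -f) (by nlinarith) (by nlinarith)
        rw [show π * -f = -(π * f) by ring, Real.sin_neg] at hb
        linarith
      rw [h, abs_of_nonpos hs, show π * -f = -(π * f) by ring, Real.sin_neg]
  rw [h2]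
  have h3 : 2 / π * (π * |f|) ≤ Real.sin (π * |f|) :=
    Real.mul_le_sin (by positivity) (by nlinarith)
  have h4 : 2 / π * (π * |f|) = 2 * |f| := by field_simp
  linarith

lemma infDist_le_sum_abs_sub_round (m : ℕ) (v : EuclideanSpace ℝ (Fin (m + 1))) :
    Metric.infDist v (intLattice m) ≤ ∑ j, |v j - round (v j)| := by
  set w : EuclideanSpace ℝ (Fin (m + 1)) := WithLp.toLp 2 (fun j => (round (v j) : ℝ)) with hw
  have hwmem : w ∈ intLattice m := fun j => ⟨round (v j), rfl⟩
  refine (Metric.infDist_le_dist_of_mem hwmem).trans ?_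
  rw [EuclideanSpace.dist_eq]
  have h1 : ∑ j, dist (v j) (w j) ^ 2 ≤ (∑ j, |v j - round (v j)|) ^ 2 := by
    have := Finset.sum_sq_le_sq_sum_of_nonneg (s := Finset.univ)
      (f := fun j : Fin (m+1) => |v j - round (v j)|) (fun i _ => abs_nonneg _)
    simpa [Real.dist_eq, sq_abs, hw] using this
  calc Real.sqrt (∑ j, dist (v j) (w j) ^ 2)
      ≤ Real.sqrt ((∑ j, |v j - round (v j)|) ^ 2) := Real.sqrt_le_sqrt h1
    _ = ∑ j, |v j - round (v j)| := Real.sqrt_sq (Finset.sum_nonneg fun i _ => abs_nonneg _)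

/-- if `(a_0,…,a_m)` satisfies the Diophantine bound
`dist((t a_0/(2π),…,t a_m/(2π)), ℤ^{m+1}) ≥ C t^{1-ν}` for all `t ≥ 1`,
then there is `c > 0` such that for all `z ∈ ℂ^{m+1}` and `t ≥ 1`,
`∑_j |e^{i a_j t} - 1| |z_j| ≥ c t^{1-ν} min_j |z_j|`. -/
theorem eta_diophantine_lower_bound (m : ℕ) (a : Fin (m + 1) → ℝ) (ha : ∀ j, 0 < a j)
    (C ν : ℝ) (hC : 0 < C) (hν : 1 ≤ ν)
    (hdio : ∀ t : ℝ, 1 ≤ t →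
      C * t ^ (1 - ν) ≤ Metric.infDist
        (show EuclideanSpace ℝ (Fin (m + 1)) from WithLp.toLp 2 (fun j => t * a j / (2 * π)))
        (intLattice m)) :
    ∃ c : ℝ, 0 < c ∧ ∀ z : Fin (m + 1) → ℂ, ∀ t : ℝ, 1 ≤ t →
      c * t ^ (1 - ν) * (Finset.univ.inf' Finset.univ_nonempty fun j => ‖z j‖) ≤
        ∑ j, ‖Complex.exp (Complex.I * (a j : ℂ) * (t : ℂ)) - 1‖ *
          ‖z j‖ := by
  refine ⟨4 * C, by positivity, fun z t ht => ?_⟩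
  set M : ℝ := Finset.univ.inf' Finset.univ_nonempty fun j => ‖z j‖ with hM
  have hM0 : 0 ≤ M := Finset.le_inf' _ _ fun j _ => norm_nonneg _
  have hπ : (0:ℝ) < π := Real.pi_pos
  set v : EuclideanSpace ℝ (Fin (m + 1)) := WithLp.toLp 2 (fun j => t * a j / (2 * π)) with hv
  have key : ∀ j, 4 * |v j - round (v j)| ≤
      ‖Complex.exp (Complex.I * (a j : ℂ) * (t : ℂ)) - 1‖ := by
    intro j
    have h1 := four_mul_dist_le (v j)
    have harg : Complex.I * (2 * (π:ℂ) * ((v j : ℝ) : ℂ)) = Complex.I * (a j : ℂ) * (t : ℂ) := by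
      have hr : 2 * π * (v j) = a j * t := by
        rw [hv]; field_simp
      rw [show (2 * (π:ℂ) * ((v j : ℝ) : ℂ)) = ((2 * π * v j : ℝ) : ℂ) by push_cast; ring, hr]
      push_cast; ring
    rwa [harg] at h1
  have hsum : C * t ^ (1 - ν) ≤ ∑ j, |v j - round (v j)| :=
    (hdio t ht).trans (infDist_le_sum_abs_sub_round m v)
  have ht0 : (0:ℝ) ≤ t ^ (1 - ν) := Real.rpow_nonneg (by linarith) _
  calc 4 * C * t ^ (1 - ν) * M = (C * t ^ (1 - ν)) * (4 * M) := by ring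
    _ ≤ (∑ j, |v j - round (v j)|) * (4 * M) :=
        mul_le_mul_of_nonneg_right hsum (by positivity)
    _ = ∑ j, (4 * |v j - round (v j)|) * M := by rw [Finset.sum_mul]; congr 1; ext j; ring
    _ ≤ ∑ j, ‖Complex.exp (Complex.I * (a j : ℂ) * (t : ℂ)) - 1‖ *
          ‖z j‖ := by
        refine Finset.sum_le_sum fun j _ => mul_le_mul (key j)
          (Finset.inf'_le _ (Finset.mem_univ j)) hM0 (norm_nonneg _)
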